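/- Let b be a symplectic (non-degenerate alternate) bilinear form on a finite-dimensional vector space V over a field K, and let u ∈ GL(V) be a b-isometry such that u − id is nilpotent. Then for every natural number k, the rank of (u − id)^{2k} is even. -/

import Mathlib

open Module LinearMap

universe w

/-- A finite-dimensional space carrying a nondegenerate alternating bilinear form
has even dimension. -/
lemma even_finrank_of_alt_nondeg {K : Type*} [Field K] :
    ∀ (n : ℕ) {V : Type w} [AddCommGroup V] [Module K V] [FiniteDimensional K V]
      (B : LinearMap.BilinForm K V), B.IsAlt →
      LinearMap.BilinForm.Nondegenerate B → Module.finrank K V = n → Even n := by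
  intro n
  induction n using Nat.strong_induction_on with
  | _ n ih =>
    intro V _ _ _ B halt hnd hrank
    rcases Nat.eq_zero_or_pos n with h0 | hpos
    · simp [h0]
    have hVnt : Nontrivial V := by
      rw [← Module.finrank_pos_iff (R := K)]
      omega
    obtain ⟨x, hx⟩ := exists_ne (0 : V)
    have hy : ∃ y, B x y ≠ 0 := by
      by_contra h
      push_neg at h
      exact hx (hnd.1 x h)
    obtain ⟨y, hxy⟩ := hy
    set W : Submodule K V := Submodule.span K {x, y} with hW
    have hskew : ∀ a b : V, B a b = - B b a := fun a b => (LinearMap.IsAlt.neg halt b a).symm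
    -- restriction to W is nondegenerate
    have hrW : (LinearMap.BilinForm.restrict B W).Nondegenerate := by
      refine (LinearMap.IsRefl.nondegenerate_iff_separatingLeft
        (B := LinearMap.BilinForm.restrict B W) (fun a b h => halt.isRefl _ _ h)).2 ?_
      rintro ⟨w, hw⟩ hww
      have hwx : B w x = 0 := hww ⟨x, Submodule.subset_span (by simp)⟩
      have hwy : B w y = 0 := hww ⟨y, Submodule.subset_span (by simp)⟩
      obtain ⟨a, b, rfl⟩ := Submodule.mem_span_pair.1 hw
      have h1 : a * B x y = 0 := by
        simpa [halt y, hskew x y] using hwy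
      have h2 : b * B y x = 0 := by
        simpa [halt x] using hwx
      have ha : a = 0 := by
        rcases mul_eq_zero.1 h1 with h | h
        · exact h
        · exact absurd h hxy
      have hb : b = 0 := by
        rcases mul_eq_zero.1 h2 with h | h
        · exact h
        · rw [hskew y x, neg_eq_zero] at h; exact absurd h hxy
      simp [ha, hb]
    -- dimension of W is 2
    have hli : LinearIndependent K ![x, y] := by
      rw [LinearIndependent.pair_iff]
      intro s t hst
      have h1 : B (s • x + t • y) y = 0 := by rw [hst]; simp
      have h2 : B x (s • x + t • y) = 0 := by rw [hst]; simp
      have hs : s = 0 := by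
        have hmul : s * B x y = 0 := by simpa [halt y] using h1
        rcases mul_eq_zero.1 hmul with h | h
        · exact h
        · exact absurd h hxy
      have ht : t = 0 := by
        have hmul : t * B x y = 0 := by simpa [halt x] using h2
        rcases mul_eq_zero.1 hmul with h | h
        · exact h
        · exact absurd h hxy
      exact ⟨hs, ht⟩
    have hWdim : finrank K W = 2 := by
      have hr : Set.range ![x, y] = {x, y} := by
        ext z
        simp [Fin.exists_fin_two]
        tauto
      rw [hW, ← hr, finrank_span_eq_card hli]
      simp
    -- orthogonal complement
    have hrefl : B.IsRefl := halt.isRefl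
    have hcompl : IsCompl W (LinearMap.BilinForm.orthogonal B W) :=
      LinearMap.BilinForm.isCompl_orthogonal_of_restrict_nondegenerate hrefl hrW
    have hrest : (LinearMap.BilinForm.restrict B
        (LinearMap.BilinForm.orthogonal B W)).Nondegenerate := by
      apply LinearMap.BilinForm.nondegenerate_restrict_of_disjoint_orthogonal B hrefl
      rw [LinearMap.BilinForm.orthogonal_orthogonal hnd hrefl]
      exact hcompl.disjoint.symm
    have haltrest : (LinearMap.BilinForm.restrict B
        (LinearMap.BilinForm.orthogonal B W)).IsAlt := fun z => halt z
    have hdim : finrank K W + finrank K (LinearMap.BilinForm.orthogonal B W) = n := by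
      rw [Submodule.finrank_add_eq_of_isCompl hcompl, hrank]
    set m := finrank K (LinearMap.BilinForm.orthogonal B W) with hm
    have hmn : m < n := by omega
    have hevenm : Even m := ih m hmn _ haltrest hrest rfl
    have : n = m + 2 := by omega
    rw [this]
    exact hevenm.add (by norm_num)

theorem rank_even_of_symplectic_unipotent {K V : Type*} [Field K] [AddCommGroup V]
    [Module K V] [FiniteDimensional K V]
    (B : V →ₗ[K] V →ₗ[K] K)
    (halt : ∀ x, B x x = 0)
    (hreg : B.Nondegenerate)
    (u : V ≃ₗ[K] V)
    (hiso : ∀ x y, B (u x) (u y) = B x y)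
    (hnil : IsNilpotent ((u : V →ₗ[K] V) - LinearMap.id)) :
    ∀ k : ℕ, Even (Module.finrank K
      (LinearMap.range (((u : V →ₗ[K] V) - LinearMap.id) ^ (2 * k)))) := by
  intro k
  set U : Module.End K V := (u : V →ₗ[K] V) with hU
  set S : Module.End K V := (u.symm : V →ₗ[K] V) with hS
  set N : Module.End K V := (u : V →ₗ[K] V) - LinearMap.id with hN
  set M : Module.End K V := (u.symm : V →ₗ[K] V) - LinearMap.id with hM
  have hUS : U * S = 1 := by ext z; simp [hU, hS, Module.End.mul_apply]
  have hSU : S * U = 1 := by ext z; simp [hU, hS, Module.End.mul_apply]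
  have halt' : LinearMap.IsAlt B := halt
  have hskew : ∀ a b : V, B a b = - B b a := fun a b => (LinearMap.IsAlt.neg halt' b a).symm
  -- adjoint identity
  have hadj1 : ∀ a z : V, B (N a) z = B a (M z) := by
    intro a z
    have h1 : B (u a) z = B a (u.symm z) := by
      conv_lhs => rw [show z = u (u.symm z) by simp]
      exact hiso a (u.symm z)
    have : N a = u a - a := by simp [hN]
    rw [this, map_sub, LinearMap.sub_apply, h1]
    have : M z = u.symm z - z := by simp [hM]
    rw [this, map_sub]
  have hadj : ∀ (j : ℕ) (a z : V), B ((N ^ j) a) z = B a ((M ^ j) z) := by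
    intro j
    induction j with
    | zero => intro a z; simp
    | succ j ihj =>
      intro a z
      calc B ((N ^ (j + 1)) a) z = B ((N ^ j) (N a)) z := by
              rw [pow_succ, Module.End.mul_apply]
        _ = B (N a) ((M ^ j) z) := ihj (N a) z
        _ = B a (M ((M ^ j) z)) := hadj1 a ((M ^ j) z)
        _ = B a ((M ^ (j + 1)) z) := by rw [pow_succ', Module.End.mul_apply]
  -- ker M^k = ker N^k
  have hN1 : N = U - 1 := hN
  have hM1 : M = S - 1 := hM
  have hSN : S * N = 1 - S := by rw [hN1, mul_sub, hSU, mul_one]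
  have hNS : N * S = 1 - S := by rw [hN1, sub_mul, hUS, one_mul]
  have hUM : U * M = 1 - U := by rw [hM1, mul_sub, hUS, mul_one]
  have hMU : M * U = 1 - U := by rw [hM1, sub_mul, hSU, one_mul]
  have hcSN : Commute S N := hSN.trans hNS.symm
  have hcUM : Commute U M := hUM.trans hMU.symm
  have hMN : M = -(S * N) := by rw [hSN, hM1, neg_sub]
  have hNM : N = -(U * M) := by rw [hUM, hN1, neg_sub]
  have hker : ∀ z : V, (M ^ k) z = 0 ↔ (N ^ k) z = 0 := by
    intro z
    constructor
    · intro h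
      have : N ^ k = (-1) ^ k * (U ^ k * M ^ k) := by
        rw [hNM, neg_eq_neg_one_mul, (Commute.neg_one_left (U * M)).mul_pow, hcUM.mul_pow]
      rw [this, Module.End.mul_apply, Module.End.mul_apply, h]
      simp
    · intro h
      have : M ^ k = (-1) ^ k * (S ^ k * N ^ k) := by
        rw [hMN, neg_eq_neg_one_mul, (Commute.neg_one_left (S * N)).mul_pow, hcSN.mul_pow]
      rw [this, Module.End.mul_apply, Module.End.mul_apply, h]
      simp
  -- orthogonal of range N^k is ker N^k
  set W : Submodule K V := LinearMap.range (N ^ k) with hWdef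
  have horth : LinearMap.BilinForm.orthogonal B W = LinearMap.ker (N ^ k) := by
    ext z
    rw [LinearMap.BilinForm.mem_orthogonal_iff, LinearMap.mem_ker]
    constructor
    · intro h
      rw [← hker]
      apply hreg.2
      intro a
      have := h ((N ^ k) a) ⟨a, rfl⟩
      rwa [hadj k a z] at this
    · intro h w hw
      obtain ⟨a, rfl⟩ := hw
      rw [hadj k a z, (hker z).mpr h]
      simp
  -- rank computation
  have hpow : N ^ (2 * k) = (N ^ k) * (N ^ k) := by rw [two_mul, pow_add]
  set f : ↥W →ₗ[K] V := (N ^ k).domRestrict W with hf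
  have hrange : LinearMap.range f = LinearMap.range (N ^ (2 * k)) := by
    rw [hpow]
    show LinearMap.range ((N ^ k).comp W.subtype) = _
    rw [LinearMap.range_comp, Submodule.range_subtype, hWdef,
      ← LinearMap.range_comp]
    rfl
  -- radical of B restricted to W
  set R : Submodule K ↥W := LinearMap.ker f with hR
  obtain ⟨T, hT⟩ := Submodule.exists_isCompl R
  set T' : Submodule K V := T.map W.subtype with hT'
  have hT'W : T' ≤ W := by
    rw [hT']
    rintro _ ⟨t, _, rfl⟩
    exact t.2
  -- B restricted to T' is nondegenerate
  have hrT : (LinearMap.BilinForm.restrict B T').Nondegenerate := by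
    refine (LinearMap.IsRefl.nondegenerate_iff_separatingLeft
      (B := LinearMap.BilinForm.restrict B T') (fun a b h => halt'.isRefl _ _ h)).2 ?_
    rintro ⟨s, hs⟩ hss
    have hsW : s ∈ W := hT'W hs
    have hsorth : s ∈ LinearMap.BilinForm.orthogonal B W := by
      rw [LinearMap.BilinForm.mem_orthogonal_iff]
      intro w hw
      have hw' : (⟨w, hw⟩ : ↥W) ∈ R ⊔ T := by rw [hT.sup_eq_top]; trivial
      obtain ⟨r, hr, t, ht, hrt⟩ := Submodule.mem_sup.1 hw'
      have hwv : w = (r : V) + (t : V) := by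
        have := congrArg (Subtype.val) hrt
        simpa using this.symm
      have hts : B s (t : V) = 0 := hss ⟨(t : V), Submodule.mem_map_of_mem ht⟩
      have hrker : (r : V) ∈ LinearMap.BilinForm.orthogonal B W := by
        rw [horth, LinearMap.mem_ker]
        exact hr
      have hrs : B s (r : V) = 0 :=
        (LinearMap.BilinForm.mem_orthogonal_iff.1 hrker) s hsW
      rw [hwv, map_add, LinearMap.add_apply,
        hskew (r : V) s, hskew (t : V) s, hrs, hts]
      simp
    have hsR : (⟨s, hsW⟩ : ↥W) ∈ R := by
      rw [hR, LinearMap.mem_ker]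
      have : s ∈ LinearMap.ker (N ^ k) := horth ▸ hsorth
      exact LinearMap.mem_ker.1 this
    have hsT : (⟨s, hsW⟩ : ↥W) ∈ T := by
      obtain ⟨t, ht, htv⟩ := Submodule.mem_map.1 hs
      have : t = ⟨s, hsW⟩ := Subtype.ext htv
      exact this ▸ ht
    have : (⟨s, hsW⟩ : ↥W) = 0 := by
      have := hT.disjoint.le_bot (Submodule.mem_inf.2 ⟨hsR, hsT⟩)
      simpa using this
    apply Subtype.ext
    simpa using congrArg Subtype.val this
  have haltT : (LinearMap.BilinForm.restrict B T').IsAlt := fun z => halt z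
  have heven : Even (finrank K T') :=
    even_finrank_of_alt_nondeg _ (LinearMap.BilinForm.restrict B T') haltT hrT rfl
  -- dimension bookkeeping
  have h1 : finrank K T' = finrank K T := Submodule.finrank_map_subtype_eq W T
  have h2 : finrank K R + finrank K T = finrank K ↥W := Submodule.finrank_add_eq_of_isCompl hT
  have h3 : finrank K (LinearMap.range f) + finrank K (LinearMap.ker f) = finrank K ↥W :=
    LinearMap.finrank_range_add_finrank_ker f
  have h4 : finrank K (LinearMap.range (N ^ (2 * k))) = finrank K T' := by
    rw [← hrange, h1]
    have := h3
    rw [← hR] at this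
    omega
  rw [h4]
  exact heven
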